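/- Let K be a semiring, n ≥ 1, and let 𝓜 be a finite set of partial 0/1-matrices in K^{n×n}. Then 𝓜 is synchronizable if and only if 𝓜 is location synchronizable. -/

import Mathlib

/-- A matrix over a semiring is a *partial 0/1-matrix* if every row contains at most one
nonzero entry, and every nonzero entry equals `1`. -/
def IsPartial01 {K : Type*} [Semiring K] {n : ℕ} (A : Matrix (Fin n) (Fin n) K) : Prop :=
  (∀ i j, A i j ≠ 0 → A i j = 1) ∧ (∀ i j j', A i j ≠ 0 → A i j' ≠ 0 → j = j')

/-- A matrix is *location synchronizing* if there is a column index `i` such that an entry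
`A j k` is nonzero exactly when `k = i`. -/
def IsLocSync {K : Type*} [Semiring K] {n : ℕ} (A : Matrix (Fin n) (Fin n) K) : Prop :=
  ∃ i, ∀ j k, A j k ≠ 0 ↔ k = i

/-- A matrix is *synchronizing* if it is location synchronizing and all entries of the
designated column coincide. -/
def IsSync {K : Type*} [Semiring K] {n : ℕ} (A : Matrix (Fin n) (Fin n) K) : Prop :=
  ∃ i, (∀ j k, A j k ≠ 0 ↔ k = i) ∧ (∀ j j', A j i = A j' i)

/-- A set of matrices is *synchronizable* if some nonempty finite product of its elements
(with repetitions allowed) is synchronizing. -/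
def IsSynchronizable {K : Type*} [Semiring K] {n : ℕ}
    (S : Set (Matrix (Fin n) (Fin n) K)) : Prop :=
  ∃ l : List (Matrix (Fin n) (Fin n) K), l ≠ [] ∧ (∀ A ∈ l, A ∈ S) ∧ IsSync l.prod

/-- A set of matrices is *location synchronizable* if some nonempty finite product of its
elements (with repetitions allowed) is location synchronizing. -/
def IsLocSynchronizable {K : Type*} [Semiring K] {n : ℕ}
    (S : Set (Matrix (Fin n) (Fin n) K)) : Prop :=
  ∃ l : List (Matrix (Fin n) (Fin n) K), l ≠ [] ∧ (∀ A ∈ l, A ∈ S) ∧ IsLocSync l.prod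

lemma isPartial01_one {K : Type*} [Semiring K] {n : ℕ} :
    IsPartial01 (1 : Matrix (Fin n) (Fin n) K) := by
  constructor
  · intro i j h
    by_cases hij : i = j
    · simp [Matrix.one_apply, hij]
    · simp [Matrix.one_apply, hij] at h
  · intro i j j' h h'
    by_cases hij : i = j
    · by_cases hij' : i = j'
      · rw [← hij, ← hij']
      · simp [Matrix.one_apply, hij'] at h'
    · simp [Matrix.one_apply, hij] at h

lemma isPartial01_mul {K : Type*} [Semiring K] {n : ℕ} {A B : Matrix (Fin n) (Fin n) K}
    (hA : IsPartial01 A) (hB : IsPartial01 B) : IsPartial01 (A * B) := by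
  have key : ∀ i, (∀ j, (A * B) i j = 0) ∨ ∃ k0, ∀ j, (A * B) i j = B k0 j := by
    intro i
    by_cases h : ∃ k0, A i k0 ≠ 0
    · obtain ⟨k0, hk0⟩ := h
      refine Or.inr ⟨k0, fun j => ?_⟩
      rw [Matrix.mul_apply, Finset.sum_eq_single k0]
      · rw [hA.1 i k0 hk0, one_mul]
      · intro k _ hk
        have : A i k = 0 := by
          by_contra hne
          exact hk (hA.2 i k k0 hne hk0)
        rw [this, zero_mul]
      · intro h; exact absurd (Finset.mem_univ k0) h
    · push_neg at h
      refine Or.inl fun j => ?_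
      rw [Matrix.mul_apply]
      exact Finset.sum_eq_zero fun k _ => by rw [h k, zero_mul]
  constructor
  · intro i j h
    rcases key i with hz | ⟨k0, hk0⟩
    · exact absurd (hz j) h
    · rw [hk0 j] at h ⊢; exact hB.1 k0 j h
  · intro i j j' h h'
    rcases key i with hz | ⟨k0, hk0⟩
    · exact absurd (hz j) h
    · rw [hk0 j] at h; rw [hk0 j'] at h'
      exact hB.2 k0 j j' h h'

lemma isPartial01_prod {K : Type*} [Semiring K] {n : ℕ}
    (l : List (Matrix (Fin n) (Fin n) K)) (hl : ∀ A ∈ l, IsPartial01 A) :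
    IsPartial01 l.prod := by
  induction l with
  | nil => simpa using isPartial01_one
  | cons A t ih =>
    rw [List.prod_cons]
    exact isPartial01_mul (hl A List.mem_cons_self)
      (ih fun B hB => hl B (List.mem_cons_of_mem A hB))

/-- A finite set of partial 0/1-matrices is synchronizable iff it is location
synchronizable. -/
theorem partial01_synchronizable_iff_locSynchronizable {K : Type*} [Semiring K] {n : ℕ}
    (hn : 1 ≤ n) (𝓜 : Finset (Matrix (Fin n) (Fin n) K))
    (h𝓜 : ∀ A ∈ 𝓜, IsPartial01 A) :
    IsSynchronizable (𝓜 : Set (Matrix (Fin n) (Fin n) K)) ↔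
      IsLocSynchronizable (𝓜 : Set (Matrix (Fin n) (Fin n) K)) := by
  constructor
  · rintro ⟨l, hne, hmem, i, hloc, _⟩
    exact ⟨l, hne, hmem, i, hloc⟩
  · rintro ⟨l, hne, hmem, i, hloc⟩
    refine ⟨l, hne, hmem, i, hloc, fun j j' => ?_⟩
    have hP : IsPartial01 l.prod :=
      isPartial01_prod l fun A hA => h𝓜 A (hmem A hA)
    have h1 : l.prod j i = 1 := hP.1 j i ((hloc j i).mpr rfl)
    have h2 : l.prod j' i = 1 := hP.1 j' i ((hloc j' i).mpr rfl)
    rw [h1, h2]
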